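/- In the 3×3 real matrix setting: if X is symmetric and trace-free, Y is skew-symmetric, D is an invertible diagonal trace-free matrix, and the equations X^2 − Y^2 = D^2 and XY + YX = 0 hold, then Y = 0 and X = D or X = −D. -/
import Mathlib


open Matrix


private lemma cancel_ne {x y z : ℝ} (h : (x - y) * z = 0) (hxy : x ≠ y) : z = 0 := by
  rcases mul_eq_zero.mp h with h | h
  · exact absurd (sub_eq_zero.mp h) hxy
  · exact h

private lemma two_eq_absurd {a b c : ℝ} (ha : a + b + c = 0)
    (ha0 : a ≠ 0) (hb0 : b ≠ 0) (hc0 : c ≠ 0)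
    (hA : a ^ 2 = b ^ 2) (hB : a ^ 2 = c ^ 2) : False := by
  have h1 : (a - b) * (a + b) = 0 := by linear_combination hA
  have h2 : (a - c) * (a + c) = 0 := by linear_combination hB
  rcases mul_eq_zero.mp h1 with h1 | h1 <;> rcases mul_eq_zero.mp h2 with h2 | h2
  · exact ha0 (by linarith)
  · exact hb0 (by linarith)
  · exact hc0 (by linarith)
  · exact ha0 (by linarith)

private lemma signs {p s u a b c : ℝ} (htr : p + s + u = 0) (ha : a + b + c = 0)
    (hab : a * b ≠ 0)
    (h1 : p ^ 2 = a ^ 2) (h2 : s ^ 2 = b ^ 2) (h3 : u ^ 2 = c ^ 2) :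
    (p = a ∧ s = b ∧ u = c) ∨ (p = -a ∧ s = -b ∧ u = -c) := by
  have hp : (p - a) * (p + a) = 0 := by linear_combination h1
  have hs : (s - b) * (s + b) = 0 := by linear_combination h2
  rcases mul_eq_zero.mp hp with hp | hp <;> rcases mul_eq_zero.mp hs with hs | hs
  · exact Or.inl ⟨by linarith, by linarith, by linarith⟩
  · exfalso
    have hu : u = -a + b := by linarith
    have hc : c = -a - b := by linarith
    rw [hu, hc] at h3
    exact hab (by linear_combination (-(1:ℝ)/4) * h3)
  · exfalso
    have hu : u = a - b := by linarith
    have hc : c = -a - b := by linarith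
    rw [hu, hc] at h3
    exact hab (by linear_combination (-(1:ℝ)/4) * h3)
  · exact Or.inr ⟨by linarith, by linarith, by linarith⟩

private lemma key {p q r s t u α β γ a b c : ℝ}
    (htr : p + s + u = 0)
    (ha0 : a ≠ 0) (hb0 : b ≠ 0) (hc0 : c ≠ 0) (hsum : a + b + c = 0)
    (E1 : p^2 + q^2 + r^2 + α^2 + β^2 = a^2)
    (E2 : q^2 + s^2 + t^2 + α^2 + γ^2 = b^2)
    (E3 : r^2 + t^2 + u^2 + β^2 + γ^2 = c^2)
    (E4 : p*q + q*s + r*t + β*γ = 0)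
    (E5 : p*r + q*t + r*u - α*γ = 0)
    (E6 : q*r + s*t + t*u + α*β = 0)
    (F1 : (p+s)*α + t*β - r*γ = 0)
    (F2 : t*α + (p+u)*β + q*γ = 0)
    (F3 : -(r*α) + q*β + (s+u)*γ = 0)
    (CA : (a^2 - b^2)*α = 0) (CB : (a^2 - c^2)*β = 0) (CC : (b^2 - c^2)*γ = 0)
    (DA : (a^2 - b^2)*q = 0) (DB : (a^2 - c^2)*r = 0) (DC : (b^2 - c^2)*t = 0) :
    α = 0 ∧ β = 0 ∧ γ = 0 ∧ q = 0 ∧ r = 0 ∧ t = 0 ∧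
      p^2 = a^2 ∧ s^2 = b^2 ∧ u^2 = c^2 := by
  by_cases hA : a^2 = b^2 <;> by_cases hB : a^2 = c^2 <;> by_cases hC : b^2 = c^2
  -- 1: hA hB hC
  · exact absurd (two_eq_absurd hsum ha0 hb0 hc0 hA hB) id
  · exact absurd (two_eq_absurd hsum ha0 hb0 hc0 hA hB) id
  -- hA ¬hB hC : implies hB
  · exact absurd (hA.trans hC) hB
  -- hA ¬hB ¬hC : case 1
  · have hβ : β = 0 := cancel_ne CB hB
    have hγ : γ = 0 := cancel_ne CC hC
    have hr : r = 0 := cancel_ne DB hB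
    have ht : t = 0 := cancel_ne DC hC
    subst hβ hγ hr ht
    have hu2 : u^2 = c^2 := by linear_combination E3
    have hu : u ≠ 0 := by
      intro h
      have hc2 : c^2 = 0 := by rw [h] at hu2; linarith
      exact hc0 (pow_eq_zero_iff two_ne_zero |>.mp hc2)
    have hq : q = 0 := by
      have h : q * u = 0 := by linear_combination q * htr - E4
      rcases mul_eq_zero.mp h with h | h
      · exact h
      · exact absurd h hu
    have hα : α = 0 := by
      have h : u * α = 0 := by linear_combination α * htr - F1
      rcases mul_eq_zero.mp h with h | h
      · exact absurd h hu
      · exact h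
    subst hq hα
    exact ⟨rfl, rfl, rfl, rfl, rfl, rfl, by linear_combination E1, by linear_combination E2, hu2⟩
  -- ¬hA hB hC : implies hA
  · exact absurd (hB.trans hC.symm) hA
  -- ¬hA hB ¬hC : case 2
  · have hα : α = 0 := cancel_ne CA hA
    have hγ : γ = 0 := cancel_ne CC hC
    have hq : q = 0 := cancel_ne DA hA
    have ht : t = 0 := cancel_ne DC hC
    subst hα hγ hq ht
    have hs2 : s^2 = b^2 := by linear_combination E2
    have hs : s ≠ 0 := by
      intro h
      have hb2 : b^2 = 0 := by rw [h] at hs2; linarith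
      exact hb0 (pow_eq_zero_iff two_ne_zero |>.mp hb2)
    have hr : r = 0 := by
      have h : r * s = 0 := by linear_combination r * htr - E5
      rcases mul_eq_zero.mp h with h | h
      · exact h
      · exact absurd h hs
    have hβ : β = 0 := by
      have h : s * β = 0 := by linear_combination β * htr - F2
      rcases mul_eq_zero.mp h with h | h
      · exact absurd h hs
      · exact h
    subst hr hβ
    exact ⟨rfl, rfl, rfl, rfl, rfl, rfl, by linear_combination E1, hs2, by linear_combination E3⟩
  -- ¬hA ¬hB hC : case 3
  · have hα : α = 0 := cancel_ne CA hA
    have hβ : β = 0 := cancel_ne CB hB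
    have hq : q = 0 := cancel_ne DA hA
    have hr : r = 0 := cancel_ne DB hB
    subst hα hβ hq hr
    have hp2 : p^2 = a^2 := by linear_combination E1
    have hp : p ≠ 0 := by
      intro h
      have ha2 : a^2 = 0 := by rw [h] at hp2; linarith
      exact ha0 (pow_eq_zero_iff two_ne_zero |>.mp ha2)
    have ht : t = 0 := by
      have h : t * p = 0 := by linear_combination t * htr - E6
      rcases mul_eq_zero.mp h with h | h
      · exact h
      · exact absurd h hp
    have hγ : γ = 0 := by
      have h : p * γ = 0 := by linear_combination γ * htr - F3
      rcases mul_eq_zero.mp h with h | h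
      · exact absurd h hp
      · exact h
    subst ht hγ
    exact ⟨rfl, rfl, rfl, rfl, rfl, rfl, hp2, by linear_combination E2, by linear_combination E3⟩
  -- none
  · have hα : α = 0 := cancel_ne CA hA
    have hβ : β = 0 := cancel_ne CB hB
    have hγ : γ = 0 := cancel_ne CC hC
    have hq : q = 0 := cancel_ne DA hA
    have hr : r = 0 := cancel_ne DB hB
    have ht : t = 0 := cancel_ne DC hC
    subst hα hβ hγ hq hr ht
    exact ⟨rfl, rfl, rfl, rfl, rfl, rfl, by linear_combination E1,
      by linear_combination E2, by linear_combination E3⟩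

/-- If `X` is a symmetric trace-free real 3×3 matrix, `Y` is skew-symmetric,
`D = diag(d₁,d₂,d₃)` is an invertible diagonal trace-free matrix, and
`X² − Y² = D²` and `XY + YX = 0`, then `Y = 0` and `X = D` or `X = −D`. -/
theorem matrix_sq_system
    (X Y : Matrix (Fin 3) (Fin 3) ℝ) (d : Fin 3 → ℝ)
    (hX : X.IsSymm) (htrX : X.trace = 0)
    (hY : Yᵀ = -Y)
    (hd0 : d 0 + d 1 + d 2 = 0) (hd1 : d 0 * d 1 * d 2 ≠ 0)
    (h1 : X ^ 2 - Y ^ 2 = (Matrix.diagonal d) ^ 2)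
    (h2 : X * Y + Y * X = 0) :
    Y = 0 ∧ (X = Matrix.diagonal d ∨ X = -(Matrix.diagonal d)) := by
  -- nonzero entries of d
  have hc0 : d 2 ≠ 0 := fun h => hd1 (by rw [h, mul_zero])
  have hab : d 0 * d 1 ≠ 0 := fun h => hd1 (by rw [h, zero_mul])
  have ha0 : d 0 ≠ 0 := fun h => hab (by rw [h, zero_mul])
  have hb0 : d 1 ≠ 0 := fun h => hab (by rw [h, mul_zero])
  -- symmetry facts
  have x10 : X 1 0 = X 0 1 := hX.apply 0 1
  have x20 : X 2 0 = X 0 2 := hX.apply 0 2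
  have x21 : X 2 1 = X 1 2 := hX.apply 1 2
  have sY : ∀ i j, Y j i = -Y i j := fun i j => by
    have := Matrix.ext_iff.mpr hY i j; simpa using this
  have y00 : Y 0 0 = 0 := by have := sY 0 0; linarith
  have y11 : Y 1 1 = 0 := by have := sY 1 1; linarith
  have y22 : Y 2 2 = 0 := by have := sY 2 2; linarith
  have y10 : Y 1 0 = -Y 0 1 := sY 0 1
  have y20 : Y 2 0 = -Y 0 2 := sY 0 2
  have y21 : Y 2 1 = -Y 1 2 := sY 1 2
  -- trace
  have htr : X 0 0 + X 1 1 + X 2 2 = 0 := by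
    rw [Matrix.trace_fin_three] at htrX; exact htrX
  -- commutation facts
  have h2' : X * Y = -(Y * X) := eq_neg_of_add_eq_zero_left h2
  have h2'' : Y * X = -(X * Y) := eq_neg_of_add_eq_zero_right h2
  have hDY : (Matrix.diagonal d) ^ 2 * Y = Y * (Matrix.diagonal d) ^ 2 := by
    calc (Matrix.diagonal d)^2 * Y = (X^2 - Y^2)*Y := by rw [h1]
      _ = X*(X*Y) - Y^2*Y := by noncomm_ring
      _ = X*(-(Y*X)) - Y^2*Y := by rw [h2']
      _ = -(X*Y)*X - Y^2*Y := by noncomm_ring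
      _ = -(-(Y*X))*X - Y^2*Y := by rw [h2']
      _ = Y*(X^2-Y^2) := by noncomm_ring
      _ = Y*(Matrix.diagonal d)^2 := by rw [h1]
  have hDX : (Matrix.diagonal d) ^ 2 * X = X * (Matrix.diagonal d) ^ 2 := by
    calc (Matrix.diagonal d)^2 * X = (X^2 - Y^2)*X := by rw [h1]
      _ = X^2*X - Y*(Y*X) := by noncomm_ring
      _ = X^2*X - Y*(-(X*Y)) := by rw [h2'']
      _ = X^2*X + (Y*X)*Y := by noncomm_ring
      _ = X^2*X + (-(X*Y))*Y := by rw [← h2'']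
      _ = X*(X^2-Y^2) := by noncomm_ring
      _ = X*(Matrix.diagonal d)^2 := by rw [h1]
  -- entry equations
  have e00 := Matrix.ext_iff.mpr h1 0 0
  have e11 := Matrix.ext_iff.mpr h1 1 1
  have e22 := Matrix.ext_iff.mpr h1 2 2
  have e01 := Matrix.ext_iff.mpr h1 0 1
  have e02 := Matrix.ext_iff.mpr h1 0 2
  have e12 := Matrix.ext_iff.mpr h1 1 2
  have f01 := Matrix.ext_iff.mpr h2 0 1
  have f02 := Matrix.ext_iff.mpr h2 0 2
  have f12 := Matrix.ext_iff.mpr h2 1 2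
  have cy01 := Matrix.ext_iff.mpr hDY 0 1
  have cy02 := Matrix.ext_iff.mpr hDY 0 2
  have cy12 := Matrix.ext_iff.mpr hDY 1 2
  have cx01 := Matrix.ext_iff.mpr hDX 0 1
  have cx02 := Matrix.ext_iff.mpr hDX 0 2
  have cx12 := Matrix.ext_iff.mpr hDX 1 2
  simp only [pow_two, Matrix.mul_apply, Fin.sum_univ_three, Matrix.sub_apply,
    Matrix.add_apply, Matrix.zero_apply, Matrix.diagonal_apply_eq,
    Matrix.diagonal] at e00 e11 e22 e01 e02 e12 f01 f02 f12 cy01 cy02 cy12 cx01 cx02 cx12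
  simp only [Matrix.of_apply, Fin.isValue, ite_true, ite_false, if_true, if_false,
    show ((0:Fin 3) = 1) = False by simp, show ((0:Fin 3) = 2) = False by simp,
    show ((1:Fin 3) = 0) = False by simp, show ((1:Fin 3) = 2) = False by simp,
    show ((2:Fin 3) = 0) = False by simp, show ((2:Fin 3) = 1) = False by simp,
    if_false, if_true, eq_self_iff_true,
    mul_zero, zero_mul, add_zero, zero_add] at e00 e11 e22 e01 e02 e12 f01 f02 f12 cy01 cy02 cy12 cx01 cx02 cx12
  simp only [x10, x20, x21, y10, y20, y21, y00, y11, y22, mul_zero, zero_mul, add_zero, zero_add, sub_zero, mul_neg, neg_mul, neg_neg] at e00 e11 e22 e01 e02 e12 f01 f02 f12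
  obtain ⟨hα, hβ, hγ, hq, hr, ht, hp2, hs2, hu2⟩ :=
    key (p := X 0 0) (q := X 0 1) (r := X 0 2) (s := X 1 1) (t := X 1 2) (u := X 2 2)
      (α := Y 0 1) (β := Y 0 2) (γ := Y 1 2) (a := d 0) (b := d 1) (c := d 2)
      htr ha0 hb0 hc0 hd0
      (by linear_combination e00) (by linear_combination e11) (by linear_combination e22)
      (by linear_combination e01) (by linear_combination e02) (by linear_combination e12)
      (by linear_combination f01) (by linear_combination f02) (by linear_combination f12)
      (by linear_combination cy01) (by linear_combination cy02) (by linear_combination cy12)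
      (by linear_combination cx01) (by linear_combination cx02) (by linear_combination cx12)
  obtain ⟨hp, hs, hu⟩ | ⟨hp, hs, hu⟩ := signs htr hd0 hab hp2 hs2 hu2 <;>
    [refine ⟨?_, Or.inl ?_⟩; refine ⟨?_, Or.inr ?_⟩] <;>
  · ext i j
    fin_cases i <;> fin_cases j <;>
      simp [Matrix.diagonal_apply, y00, y11, y22, y10, y20, y21, hα, hβ, hγ,
        x10, x20, x21, hq, hr, ht, hp, hs, hu]
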